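/- Let 0 < m ≤ a ≤ M, 0 < m ≤ b ≤ M, and v ∈ [0,1]. Then (1-v)a + vb - a^(1-v)b^v ≤ max{g_v(h), g_v(1/h)}·a ≤ L(1,h)·log S(h)·a, where h = M/m, g_v(x) = (1-v)+vx-x^v, L(1,h) = (h-1)/log h, and S(h) is the Specht ratio. -/

import Mathlib

open Real

private lemma key_tangent {h v : ℝ} (hh : 1 < h) :
    (1 - v) + v * h - h ^ v ≤
      1 - (h - 1) / Real.log h + (h - 1) / Real.log h * Real.log ((h - 1) / Real.log h) := by
  set L : ℝ := (h - 1) / Real.log h with hLdef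
  have hlog : 0 < Real.log h := Real.log_pos hh
  have hL : 0 < L := div_pos (by linarith) hlog
  have hLlog : L * Real.log h = h - 1 := by
    rw [hLdef, div_mul_cancel₀ _ hlog.ne']
  have hrpow : h ^ v = Real.exp (v * Real.log h) := by
    rw [Real.rpow_def_of_pos (by linarith), mul_comm]
  have htan : L * ((v * Real.log h - Real.log L) + 1) ≤ h ^ v := by
    have h1 : (v * Real.log h - Real.log L) + 1 ≤ Real.exp (v * Real.log h - Real.log L) :=
      Real.add_one_le_exp _
    have h2 : L * ((v * Real.log h - Real.log L) + 1) ≤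
        L * Real.exp (v * Real.log h - Real.log L) := by
      exact mul_le_mul_of_nonneg_left h1 hL.le
    calc L * ((v * Real.log h - Real.log L) + 1)
        ≤ L * Real.exp (v * Real.log h - Real.log L) := h2
      _ = Real.exp (Real.log L) * Real.exp (v * Real.log h - Real.log L) := by
          rw [Real.exp_log hL]
      _ = Real.exp (v * Real.log h) := by rw [← Real.exp_add]; ring_nf
      _ = h ^ v := hrpow.symm
  have hexp : L * ((v * Real.log h - Real.log L) + 1) =
      v * (h - 1) - L * Real.log L + L := by
    have h2 : L * (v * Real.log h) = v * (h - 1) := by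
      rw [show L * (v * Real.log h) = v * (L * Real.log h) from by ring, hLlog]
    rw [← h2]; ring
  linarith [htan, hexp ▸ htan]

private lemma logS_val {h : ℝ} (hh : 1 < h) :
    (h - 1) / Real.log h *
        Real.log (h ^ (1 / (h - 1)) / (Real.exp 1 * (1 / (h - 1) * Real.log h))) =
      1 - (h - 1) / Real.log h + (h - 1) / Real.log h * Real.log ((h - 1) / Real.log h) := by
  set L : ℝ := (h - 1) / Real.log h with hLdef
  have hlog : 0 < Real.log h := Real.log_pos hh
  have hd : 0 < h - 1 := by linarith
  have hL : 0 < L := div_pos hd hlog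
  have hpos : (0:ℝ) < h := by linarith
  have hnum : (0:ℝ) < h ^ (1 / (h - 1)) := Real.rpow_pos_of_pos hpos _
  have hden2 : (0:ℝ) < 1 / (h - 1) * Real.log h := by positivity
  have hden : (0:ℝ) < Real.exp 1 * (1 / (h - 1) * Real.log h) := by positivity
  have hinv : 1 / (h - 1) * Real.log h = L⁻¹ := by
    rw [hLdef]; field_simp
  rw [Real.log_div hnum.ne' hden.ne', Real.log_rpow hpos,
    Real.log_mul (Real.exp_pos 1).ne' hden2.ne', Real.log_exp, hinv, Real.log_inv]
  have h1 : L * (1 / (h - 1) * Real.log h) = 1 := by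
    rw [hinv]; field_simp
  nlinarith [h1]

private lemma g_nonneg {h w : ℝ} (hh : 0 < h) (hw0 : 0 ≤ w) (hw1 : w ≤ 1) :
    0 ≤ (1 - w) + w * h - h ^ w := by
  have h1 := Real.geom_mean_le_arith_mean2_weighted (by linarith : (0:ℝ) ≤ 1 - w) hw0
    (by norm_num : (0:ℝ) ≤ 1) hh.le (by ring)
  rw [Real.one_rpow, one_mul] at h1
  linarith

theorem stmt_19 (a b m M v : ℝ) (hm : 0 < m) (hmM : m < M)
    (ha1 : m ≤ a) (ha2 : a ≤ M) (hb1 : m ≤ b) (hb2 : b ≤ M)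
    (hv0 : 0 ≤ v) (hv1 : v ≤ 1) :
    (1 - v) * a + v * b - a ^ (1 - v) * b ^ v ≤
      max ((1 - v) + v * (M / m) - (M / m) ^ v)
          ((1 - v) + v * (m / M) - (M / m) ^ (-v)) * a ∧
    max ((1 - v) + v * (M / m) - (M / m) ^ v)
        ((1 - v) + v * (m / M) - (M / m) ^ (-v)) * a ≤
      (M / m - 1) / Real.log (M / m) *
        Real.log ((M / m) ^ (1 / (M / m - 1)) /
          (Real.exp 1 * ((1 / (M / m - 1)) * Real.log (M / m)))) * a := by
  have hM : 0 < M := lt_trans hm hmM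
  have ha : 0 < a := lt_of_lt_of_le hm ha1
  have hb : 0 < b := lt_of_lt_of_le hm hb1
  have hh : 1 < M / m := (one_lt_div hm).mpr hmM
  have hh0 : (0:ℝ) < M / m := by linarith
  have hmMpos : 0 < m / M := div_pos hm hM
  -- rewrite (M/m)^(-v) as (m/M)^v
  have hneg : (M / m) ^ (-v) = (m / M) ^ v := by
    rw [Real.rpow_neg hh0.le, ← Real.inv_rpow hh0.le, inv_div]
  constructor
  · -- part 1 : convexity
    -- LHS = a * g_v (b/a)
    have hab : a ^ (1 - v) * b ^ v = a * (b / a) ^ v := by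
      rw [Real.div_rpow hb.le ha.le, Real.rpow_sub ha, Real.rpow_one]
      field_simp
    have hconv : ConvexOn ℝ (Set.Ici (0:ℝ))
        (fun x : ℝ => (1 - v) + v * x - x ^ v) := by
      have h1 : ConvexOn ℝ (Set.Ici (0:ℝ)) (fun x : ℝ => -(x ^ v)) :=
        (Real.concaveOn_rpow hv0 hv1).neg
      have h2 : ConvexOn ℝ (Set.Ici (0:ℝ)) (fun x : ℝ => (1 - v) + v * x) := by
        have := (convexOn_id (convex_Ici (0:ℝ))).smul hv0
        exact (convexOn_const _ (convex_Ici 0)).add (by simpa [smul_eq_mul] using this)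
      have hfun : (fun x : ℝ => (1 - v) + v * x - x ^ v)
          = fun x : ℝ => ((1 - v) + v * x) + -(x ^ v) := by funext x; ring
      rw [hfun]; exact h2.add h1
    have hseg : b / a ∈ segment ℝ (m / M) (M / m) := by
      rw [segment_eq_Icc ((div_le_div_iff₀ hM hm).mpr (by nlinarith) : m / M ≤ M / m)]
      constructor
      · rw [div_le_div_iff₀ hM ha]; nlinarith
      · rw [div_le_div_iff₀ ha hm]; nlinarith
    have hmem1 : m / M ∈ Set.Ici (0:ℝ) := hmMpos.le
    have hmem2 : M / m ∈ Set.Ici (0:ℝ) := hh0.le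
    have hle := hconv.le_on_segment hmem1 hmem2 hseg
    have hle' : (1 - v) + v * (b / a) - (b / a) ^ v ≤
        max ((1 - v) + v * (M / m) - (M / m) ^ v)
            ((1 - v) + v * (m / M) - (M / m) ^ (-v)) := by
      rw [hneg, max_comm]
      exact hle
    calc (1 - v) * a + v * b - a ^ (1 - v) * b ^ v
        = ((1 - v) + v * (b / a) - (b / a) ^ v) * a := by
          rw [hab]; field_simp; all_goals ring
      _ ≤ _ := mul_le_mul_of_nonneg_right hle' ha.le
  · -- part 2
    set h : ℝ := M / m with hhdef
    set L : ℝ := (h - 1) / Real.log h with hLdef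
    have hC1 : (1 - v) + v * h - h ^ v ≤ 1 - L + L * Real.log L := key_tangent hh
    have hC2 : (1 - v) + v * (m / M) - h ^ (-v) ≤ 1 - L + L * Real.log L := by
      have hmm : m / M = h⁻¹ := by rw [hhdef, inv_div]
      have hg2 : h * ((1 - v) + v * (m / M) - h ^ (-v)) =
          (1 - (1 - v)) + (1 - v) * h - h ^ (1 - v) := by
        have e1 : h * (m / M) = 1 := by rw [hmm]; field_simp
        have e2 : h * h ^ (-v) = h ^ (1 - v) := by
          rw [Real.rpow_sub (by linarith : (0:ℝ) < h), Real.rpow_one,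
            Real.rpow_neg (by linarith : (0:ℝ) ≤ h)]
          field_simp
        rw [show h * ((1 - v) + v * (m / M) - h ^ (-v)) =
          (1 - v) * h + v * (h * (m / M)) - h * h ^ (-v) from by ring, e1, e2]
        all_goals ring
      have hgn : 0 ≤ (1 - (1 - v)) + (1 - v) * h - h ^ (1 - v) :=
        g_nonneg (by linarith) (by linarith) (by linarith)
      have hkey := key_tangent (v := 1 - v) hh
      -- g_v(1/h) = g_{1-v}(h)/h ≤ g_{1-v}(h)
      have hstep : (1 - v) + v * (m / M) - h ^ (-v) ≤
          (1 - (1 - v)) + (1 - v) * h - h ^ (1 - v) := by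
        nlinarith [hg2, hgn, hh]
      linarith
    have hmax : max ((1 - v) + v * h - h ^ v)
        ((1 - v) + v * (m / M) - h ^ (-v)) ≤ 1 - L + L * Real.log L :=
      max_le hC1 hC2
    rw [show (h - 1) / Real.log h *
        Real.log (h ^ (1 / (h - 1)) / (Real.exp 1 * (1 / (h - 1) * Real.log h))) =
        1 - L + L * Real.log L from logS_val hh]
    exact mul_le_mul_of_nonneg_right hmax ha.le
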